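/- arXiv:1804.03968 — 2 statements merged into one kernel-verified Lean document; each statement's English description precedes it below -/
import Mathlib

section
/- Let α, ω₀ > 0 with α < ω₀, let H = i·!![0, 1; -ω₀², -2α], and suppose X is a 2×2 complex matrix with HX = XH†. Then X = 0. -/
open Matrix Complex

theorem stmt_9 (α ω₀ : ℝ) (hα : 0 < α) (hω : 0 < ω₀) (h : α < ω₀)
    (H : Matrix (Fin 2) (Fin 2) ℂ)
    (hH : H = Complex.I • !![0, 1; -(ω₀:ℂ)^2, -2*α])
    (X : Matrix (Fin 2) (Fin 2) ℂ) (hX : H * X = X * Hᴴ) :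
    X = 0 := by
  subst hH
  have e : ∀ i j, ((Complex.I • !![0, 1; -(ω₀:ℂ)^2, -2*α]) * X) i j
      = (X * (Complex.I • !![0, 1; -(ω₀:ℂ)^2, -2*α])ᴴ) i j := fun i j => by rw [hX]
  have e00 := e 0 0
  have e01 := e 0 1
  have e10 := e 1 0
  have e11 := e 1 1
  simp [Matrix.mul_apply, Fin.sum_univ_two, Matrix.conjTranspose_apply,
    ← Complex.ofReal_pow, Complex.ext_iff, Complex.add_re, Complex.add_im,
    Complex.mul_re, Complex.mul_im] at e00 e01 e10 e11
  have h4α : (4*α) ≠ 0 := by positivity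
  have hωne : ω₀^2 ≠ 0 := by positivity
  have hdi : (X 1 1).im = 0 :=
    (mul_eq_zero.mp (by linear_combination e11.1 + ω₀^2 * e00.1 :
      4*α*(X 1 1).im = 0)).resolve_left h4α
  have hdr : (X 1 1).re = 0 :=
    (mul_eq_zero.mp (by linear_combination -e11.2 - ω₀^2 * e00.2 :
      4*α*(X 1 1).re = 0)).resolve_left h4α
  have hbi : (X 0 1).im = 0 :=
    (mul_eq_zero.mp (by linear_combination e01.1 - e10.1 - 2*α*e00.1 :
      4*α*(X 0 1).im = 0)).resolve_left h4α
  have hbr : (X 0 1).re = 0 :=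
    (mul_eq_zero.mp (by linear_combination -e01.2 + e10.2 + 2*α*e00.2 :
      4*α*(X 0 1).re = 0)).resolve_left h4α
  have hci : (X 1 0).im = 0 := by linear_combination -e00.1 - hbi
  have hcr : (X 1 0).re = 0 := by linear_combination e00.2 - hbr
  have hai : (X 0 0).im = 0 :=
    (mul_eq_zero.mp (by linear_combination e01.1 + hdi - 2*α*hbi :
      ω₀^2*(X 0 0).im = 0)).resolve_left hωne
  have har : (X 0 0).re = 0 :=
    (mul_eq_zero.mp (by linear_combination -e01.2 + hdr - 2*α*hbr :
      ω₀^2*(X 0 0).re = 0)).resolve_left hωne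
  ext i j
  fin_cases i <;> fin_cases j <;>
    simp [Complex.ext_iff, har, hai, hbr, hbi, hcr, hci, hdr, hdi]
end

section
/- Let α, ω₀ > 0 with α > ω₀. Set a = α + √(α²-ω₀²), b = α - √(α²-ω₀²), ρ = -iα - i√(α²-ω₀²), γ = 1/(2√(α²-ω₀²)), ω = 2i√(α²-ω₀²). Then ωγ = i, (a-b)γ = 1, and the matrix !![ωγa + ρ, ωγ; -ωγab, -ωγb + ρ] equals the RLC Hamiltonian H = i·!![0, 1; -ω₀², -2α]. -/
open Matrix Complex

theorem stmt_16 (α ω₀ : ℝ) (hα : 0 < α) (hω : 0 < ω₀) (h : α > ω₀)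
    (a b ρ γ ω : ℂ)
    (ha : a = (α:ℂ) + Real.sqrt (α^2 - ω₀^2))
    (hb : b = (α:ℂ) - Real.sqrt (α^2 - ω₀^2))
    (hρ : ρ = -Complex.I * α - Complex.I * Real.sqrt (α^2 - ω₀^2))
    (hγ : γ = 1 / (2 * Real.sqrt (α^2 - ω₀^2)))
    (hω' : ω = 2 * Complex.I * Real.sqrt (α^2 - ω₀^2)) :
    ω * γ = Complex.I ∧ (a - b) * γ = 1 ∧
    !![ω*γ*a + ρ, ω*γ; -(ω*γ*a*b), -(ω*γ*b) + ρ] =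
      Complex.I • !![0, 1; -(ω₀:ℂ)^2, -2*α] := by
  have hpos : (0:ℝ) < α^2 - ω₀^2 := by nlinarith
  have hs : Real.sqrt (α^2 - ω₀^2) ^ 2 = α^2 - ω₀^2 := Real.sq_sqrt hpos.le
  have hsne : (Real.sqrt (α^2 - ω₀^2) : ℂ) ≠ 0 := by
    exact_mod_cast (Real.sqrt_pos.mpr hpos).ne'
  have hs' : (Real.sqrt (α^2 - ω₀^2) : ℂ) ^ 2 = (α:ℂ)^2 - (ω₀:ℂ)^2 := by
    exact_mod_cast congrArg (Complex.ofReal ·) hs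
  have h1 : ω * γ = Complex.I := by
    rw [hω', hγ]; push_cast; field_simp
  have h2 : (a - b) * γ = 1 := by
    rw [ha, hb, hγ]; push_cast; field_simp; ring
  refine ⟨h1, h2, ?_⟩
  rw [h1, ha, hb, hρ]
  ext i j
  fin_cases i <;> fin_cases j <;>
    simp [Matrix.smul_apply]
  · ring
  · linear_combination (-Complex.I) * hs'
  · ring
end
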